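/- Under the stratified randomized survey experiment, for every stratum k and arm t∈{0,1}, the within-stratum sample variance of observed outcomes is unbiased: E[s²_{[k]t}] = S²_{[k]t}. Consequently, using Π_{[k]}²π_{[k]}^{-1}f_{[k]} = Π_{[k]}f, the expectation of the variance estimator satisfies exactly E[V̂_{ττ}] − V_{ττ} = f·Σ_{k=1}^K Π_{[k]} S²_{[k]τ} ≥ 0, so V̂_{ττ} is conservative in expectation, with equality if and only if S²_{[k]τ}=0 for every k. -/

import Mathlib

open MeasureTheory ProbabilityTheory Filter Matrix
open scoped ENNReal NNReal

noncomputable section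

namespace SurveyExperiments

/-- The uniform probability measure on a finite set of outcomes. -/
def unif {α : Type*} [MeasurableSpace α] (s : Finset α) : Measure α :=
  (s.card : ℝ≥0∞)⁻¹ • ∑ a ∈ s, MeasureTheory.Measure.dirac a

/-- The covariance of two real-valued random variables. -/
def covRV {Ω : Type*} [MeasurableSpace Ω] (μ : Measure Ω) (f g : Ω → ℝ) : ℝ :=
  ∫ ω, (f ω - ∫ x, f x ∂μ) * (g ω - ∫ x, g x ∂μ) ∂μ

/-- The total variation distance between two measures. -/
def dTV {α : Type*} [MeasurableSpace α] (P Q : Measure α) : ℝ :=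
  ⨆ A : Set α, |(P A).toReal - (Q A).toReal|

/-- The standard Gaussian measure on `ℝ^J`. -/
def stdGaussianPi (J : ℕ) : Measure (Fin J → ℝ) := Measure.pi fun _ => gaussianReal 0 1

/-- The law `L_{J,a}` of the first coordinate of a standard Gaussian vector in `ℝ^J`
conditioned on the event that its squared norm is at most `a`. -/
def truncGaussian (J : ℕ) [NeZero J] (a : ℝ) : Measure ℝ :=
  Measure.map (fun x => x 0)
    (ProbabilityTheory.cond (stdGaussianPi J) {x | ∑ i, (x i) ^ 2 ≤ a})

/-- `ν_{J,a}`, the variance of the truncated Gaussian `L_{J,a}`. -/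
def nu (J : ℕ) [NeZero J] (a : ℝ) : ℝ := variance id (truncGaussian J a)

/-- The law of `√v (√(1-rW-rX) ε + √rW L_{J1,aS} + √rX L_{J2,aT})` with independent
`ε ~ N(0,1)`, `L_{J1,aS}`, `L_{J2,aT}`. -/
def rrLimitLaw (v rW rX : ℝ) (J1 J2 : ℕ) [NeZero J1] [NeZero J2] (aS aT : ℝ) : Measure ℝ :=
  Measure.map
    (fun p : ℝ × ℝ × ℝ =>
      Real.sqrt v * (Real.sqrt (1 - rW - rX) * p.1 + Real.sqrt rW * p.2.1 + Real.sqrt rX * p.2.2))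
    ((gaussianReal 0 1).prod ((truncGaussian J1 aS).prod (truncGaussian J2 aT)))

/-- The `p`-th quantile of a measure on `ℝ`. -/
def quantile (μ : Measure ℝ) (p : ℝ) : ℝ := sInf {x : ℝ | ENNReal.ofReal p ≤ μ (Set.Iic x)}

/-- The data of a stratified (randomized survey) experiment: a population of `N` units
partitioned into `K` strata by `st`, with `nk k` units sampled and `nk1 k` sampled units
treated in stratum `k`. -/
structure SRSE where
  K : ℕ
  N : ℕ
  st : Fin N → Fin K
  nk : Fin K → ℕ
  nk1 : Fin K → ℕ

namespace SRSE

variable (E : SRSE)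

def stratum (k : Fin E.K) : Finset (Fin E.N) := Finset.univ.filter fun i => E.st i = k
def Nk (k : Fin E.K) : ℕ := (E.stratum k).card
def nk0 (k : Fin E.K) : ℕ := E.nk k - E.nk1 k
def n : ℕ := ∑ k, E.nk k
def Pi (k : Fin E.K) : ℝ := (E.Nk k : ℝ) / (E.N : ℝ)
def pik (k : Fin E.K) : ℝ := (E.nk k : ℝ) / (E.n : ℝ)
def fk (k : Fin E.K) : ℝ := (E.nk k : ℝ) / (E.Nk k : ℝ)
def f : ℝ := (E.n : ℝ) / (E.N : ℝ)
def e1 (k : Fin E.K) : ℝ := (E.nk1 k : ℝ) / (E.nk k : ℝ)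
def e0 (k : Fin E.K) : ℝ := (E.nk0 k : ℝ) / (E.nk k : ℝ)

/-- Sample space: a pair of sampling indicators and treatment indicators. -/
abbrev Omega := (Fin E.N → Bool) × (Fin E.N → Bool)

/-- The attainable pairs of indicators: `nk k` sampled and `nk1 k` treated units in each
stratum `k`, with treated units sampled. -/
def valid : Finset E.Omega :=
  Finset.univ.filter fun ω =>
    (∀ k, ((E.stratum k).filter fun i => ω.1 i = true).card = E.nk k) ∧
    (∀ k, ((E.stratum k).filter fun i => ω.1 i = true ∧ ω.2 i = true).card = E.nk1 k) ∧
    (∀ i, ω.2 i = true → ω.1 i = true)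

/-- The stratified randomized survey experiment (SRSE) design: stratified random sampling
without replacement followed by stratified randomization, i.e. the uniform distribution over
all attainable pairs of indicator vectors. -/
def P : Measure E.Omega := unif E.valid

def Z (ω : E.Omega) (i : Fin E.N) : ℝ := if ω.1 i then 1 else 0
def T (ω : E.Omega) (i : Fin E.N) : ℝ := if ω.2 i then 1 else 0

def meanK (a : Fin E.N → ℝ) (k : Fin E.K) : ℝ := (∑ i ∈ E.stratum k, a i) / (E.Nk k : ℝ)
def covK (a b : Fin E.N → ℝ) (k : Fin E.K) : ℝ :=
  (∑ i ∈ E.stratum k, (a i - E.meanK a k) * (b i - E.meanK b k)) / ((E.Nk k : ℝ) - 1)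
def meanAll (a : Fin E.N → ℝ) : ℝ := (∑ i, a i) / (E.N : ℝ)
def varAll (a : Fin E.N → ℝ) : ℝ := (∑ i, (a i - E.meanAll a) ^ 2) / ((E.N : ℝ) - 1)

def mean1 (a : Fin E.N → ℝ) (k : Fin E.K) (ω : E.Omega) : ℝ :=
  (∑ i ∈ E.stratum k, E.Z ω i * E.T ω i * a i) / (E.nk1 k : ℝ)
def mean0 (a : Fin E.N → ℝ) (k : Fin E.K) (ω : E.Omega) : ℝ :=
  (∑ i ∈ E.stratum k, E.Z ω i * (1 - E.T ω i) * a i) / (E.nk0 k : ℝ)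
def meanS (a : Fin E.N → ℝ) (k : Fin E.K) (ω : E.Omega) : ℝ :=
  (∑ i ∈ E.stratum k, E.Z ω i * a i) / (E.nk k : ℝ)

/-- The stratified difference-in-means estimator. -/
def hatTau (Y1 Y0 : Fin E.N → ℝ) (ω : E.Omega) : ℝ :=
  ∑ k, E.Pi k * (E.mean1 Y1 k ω - E.mean0 Y0 k ω)
/-- The finite-population average treatment effect. -/
def tau (Y1 Y0 : Fin E.N → ℝ) : ℝ := ∑ k, E.Pi k * (E.meanK Y1 k - E.meanK Y0 k)
/-- The treated/control covariate-mean-difference `τ̂_X`. -/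
def hatTauX {J : ℕ} (X : Fin E.N → Fin J → ℝ) (ω : E.Omega) : Fin J → ℝ := fun j =>
  ∑ k, E.Pi k * (E.mean1 (fun i => X i j) k ω - E.mean0 (fun i => X i j) k ω)
/-- The sampled/population covariate-mean-difference `δ̂_W`. -/
def hatDeltaW {J : ℕ} (W : Fin E.N → Fin J → ℝ) (ω : E.Omega) : Fin J → ℝ := fun j =>
  ∑ k, E.Pi k * (E.meanS (fun i => W i j) k ω - E.meanK (fun i => W i j) k)

def sCov1 (a b : Fin E.N → ℝ) (k : Fin E.K) (ω : E.Omega) : ℝ :=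
  (∑ i ∈ E.stratum k, E.Z ω i * E.T ω i * (a i - E.mean1 a k ω) * (b i - E.mean1 b k ω)) /
    ((E.nk1 k : ℝ) - 1)
def sCov0 (a b : Fin E.N → ℝ) (k : Fin E.K) (ω : E.Omega) : ℝ :=
  (∑ i ∈ E.stratum k, E.Z ω i * (1 - E.T ω i) * (a i - E.mean0 a k ω) * (b i - E.mean0 b k ω)) /
    ((E.nk0 k : ℝ) - 1)
def sCovS (a b : Fin E.N → ℝ) (k : Fin E.K) (ω : E.Omega) : ℝ :=
  (∑ i ∈ E.stratum k, E.Z ω i * (a i - E.meanS a k ω) * (b i - E.meanS b k ω)) /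
    ((E.nk k : ℝ) - 1)

/-- The `(τ,τ)` entry of the covariance matrix `V`. -/
def Vtt (Y1 Y0 : Fin E.N → ℝ) : ℝ :=
  ∑ k, (E.Pi k) ^ 2 / E.pik k *
    (E.covK Y1 Y1 k / E.e1 k + E.covK Y0 Y0 k / E.e0 k -
      E.fk k * E.covK (fun i => Y1 i - Y0 i) (fun i => Y1 i - Y0 i) k)
/-- The `(τ,X)` block of `V`. -/
def VtX {J : ℕ} (Y1 Y0 : Fin E.N → ℝ) (X : Fin E.N → Fin J → ℝ) : Fin J → ℝ := fun j =>
  ∑ k, (E.Pi k) ^ 2 / E.pik k *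
    (E.covK (fun i => X i j) Y1 k / E.e1 k + E.covK (fun i => X i j) Y0 k / E.e0 k)
/-- The `(τ,W)` block of `V`. -/
def VtW {J : ℕ} (Y1 Y0 : Fin E.N → ℝ) (W : Fin E.N → Fin J → ℝ) : Fin J → ℝ := fun j =>
  ∑ k, (E.Pi k) ^ 2 / E.pik k *
    ((1 - E.fk k) * E.covK (fun i => W i j) (fun i => Y1 i - Y0 i) k)
/-- The `(X,X)` block of `V`. -/
def VXX {J : ℕ} (X : Fin E.N → Fin J → ℝ) : Matrix (Fin J) (Fin J) ℝ :=
  Matrix.of fun j j' =>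
    ∑ k, (E.Pi k) ^ 2 / E.pik k *
      (E.covK (fun i => X i j) (fun i => X i j') k / (E.e1 k * E.e0 k))
/-- The `(W,W)` block of `V`. -/
def VWW {J : ℕ} (W : Fin E.N → Fin J → ℝ) : Matrix (Fin J) (Fin J) ℝ :=
  Matrix.of fun j j' =>
    ∑ k, (E.Pi k) ^ 2 / E.pik k *
      ((1 - E.fk k) * E.covK (fun i => W i j) (fun i => W i j') k)

/-- The covariance matrix of `δ̂_W` under stratified random sampling. -/
def covWSampling {J : ℕ} (W : Fin E.N → Fin J → ℝ) : Matrix (Fin J) (Fin J) ℝ :=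
  Matrix.of fun j j' =>
    ∑ k, (E.Pi k) ^ 2 * ((E.nk k : ℝ)⁻¹ - (E.Nk k : ℝ)⁻¹) *
      E.covK (fun i => W i j) (fun i => W i j') k
/-- The Mahalanobis sampling-balance criterion `M_S`. -/
def MS {J : ℕ} (W : Fin E.N → Fin J → ℝ) (ω : E.Omega) : ℝ :=
  E.hatDeltaW W ω ⬝ᵥ ((E.covWSampling W)⁻¹ *ᵥ E.hatDeltaW W ω)
/-- The conditional covariance matrix of `τ̂_X` given the sample. -/
def covXAssign {J : ℕ} (X : Fin E.N → Fin J → ℝ) (ω : E.Omega) : Matrix (Fin J) (Fin J) ℝ :=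
  Matrix.of fun j j' =>
    ∑ k, (E.Pi k) ^ 2 * ((E.nk k : ℝ) / ((E.nk1 k : ℝ) * (E.nk0 k : ℝ))) *
      E.sCovS (fun i => X i j) (fun i => X i j') k ω
/-- The Mahalanobis assignment-balance criterion `M_T`. -/
def MT {J : ℕ} (X : Fin E.N → Fin J → ℝ) (ω : E.Omega) : ℝ :=
  E.hatTauX X ω ⬝ᵥ ((E.covXAssign X ω)⁻¹ *ᵥ E.hatTauX X ω)
/-- The acceptance event `{M_S ≤ a_S, M_T ≤ a_T}`. -/
def accept {J1 J2 : ℕ} (W : Fin E.N → Fin J1 → ℝ) (X : Fin E.N → Fin J2 → ℝ) (aS aT : ℝ) :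
    Set E.Omega := {ω | E.MS W ω ≤ aS ∧ E.MT X ω ≤ aT}

/-- The SRSRR design: the SRSE design conditioned on acceptance of both balance criteria. -/
def Prr {J1 J2 : ℕ} (W : Fin E.N → Fin J1 → ℝ) (X : Fin E.N → Fin J2 → ℝ) (aS aT : ℝ) :
    Measure E.Omega := ProbabilityTheory.cond E.P (E.accept W X aS aT)

/-- The conservative variance estimator `V̂_ττ`. -/
def hatVtt (Y1 Y0 : Fin E.N → ℝ) (ω : E.Omega) : ℝ :=
  ∑ k, (E.Pi k) ^ 2 / E.pik k * (E.sCov1 Y1 Y1 k ω / E.e1 k + E.sCov0 Y0 Y0 k ω / E.e0 k)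
/-- The estimator `V̂_τX`. -/
def hatVtX {J : ℕ} (Y1 Y0 : Fin E.N → ℝ) (X : Fin E.N → Fin J → ℝ) (ω : E.Omega) : Fin J → ℝ :=
  fun j => ∑ k, (E.Pi k) ^ 2 / E.pik k *
    (E.sCov1 (fun i => X i j) Y1 k ω / E.e1 k + E.sCov0 (fun i => X i j) Y0 k ω / E.e0 k)
/-- The estimator `V̂_τW`. -/
def hatVtW {J : ℕ} (Y1 Y0 : Fin E.N → ℝ) (W : Fin E.N → Fin J → ℝ) (ω : E.Omega) : Fin J → ℝ :=
  fun j => ∑ k, (E.Pi k) ^ 2 / E.pik k *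
    ((1 - E.fk k) * (E.sCov1 (fun i => W i j) Y1 k ω - E.sCov0 (fun i => W i j) Y0 k ω))
/-- The estimator `V̂_XX`. -/
def hatVXX {J : ℕ} (X : Fin E.N → Fin J → ℝ) (ω : E.Omega) : Matrix (Fin J) (Fin J) ℝ :=
  Matrix.of fun j j' => ∑ k, (E.Pi k) ^ 2 / E.pik k *
    (E.sCovS (fun i => X i j) (fun i => X i j') k ω / (E.e1 k * E.e0 k))
/-- The plug-in estimator `R̂²_W` (also used for `R̂²_E` with analysis-stage covariates). -/
def hatRW2 {J : ℕ} (Y1 Y0 : Fin E.N → ℝ) (W : Fin E.N → Fin J → ℝ) (ω : E.Omega) : ℝ :=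
  (E.hatVtW Y1 Y0 W ω ⬝ᵥ ((E.VWW W)⁻¹ *ᵥ E.hatVtW Y1 Y0 W ω)) / E.hatVtt Y1 Y0 ω
/-- The plug-in estimator `R̂²_X` (also used for `R̂²_C` with analysis-stage covariates). -/
def hatRX2 {J : ℕ} (Y1 Y0 : Fin E.N → ℝ) (X : Fin E.N → Fin J → ℝ) (ω : E.Omega) : ℝ :=
  (E.hatVtX Y1 Y0 X ω ⬝ᵥ ((E.hatVXX X ω)⁻¹ *ᵥ E.hatVtX Y1 Y0 X ω)) / E.hatVtt Y1 Y0 ω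

/-- The estimated regression-adjustment coefficient `β̂`. -/
def hatBeta {J : ℕ} (Y1 Y0 : Fin E.N → ℝ) (C : Fin E.N → Fin J → ℝ) (ω : E.Omega) : Fin J → ℝ :=
  (E.hatVXX C ω)⁻¹ *ᵥ E.hatVtX Y1 Y0 C ω
/-- The estimated regression-adjustment coefficient `γ̂`. -/
def hatGamma {J : ℕ} (Y1 Y0 : Fin E.N → ℝ) (Ecov : Fin E.N → Fin J → ℝ) (ω : E.Omega) :
    Fin J → ℝ :=
  (E.VWW Ecov)⁻¹ *ᵥ E.hatVtW Y1 Y0 Ecov ω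
/-- The regression-adjusted estimator `τ̂_adj = τ̂ - β̂ᵀτ̂_C - γ̂ᵀδ̂_E`. -/
def hatTauAdj {J3 J4 : ℕ} (Y1 Y0 : Fin E.N → ℝ) (C : Fin E.N → Fin J4 → ℝ)
    (Ecov : Fin E.N → Fin J3 → ℝ) (ω : E.Omega) : ℝ :=
  E.hatTau Y1 Y0 ω - E.hatBeta Y1 Y0 C ω ⬝ᵥ E.hatTauX C ω -
    E.hatGamma Y1 Y0 Ecov ω ⬝ᵥ E.hatDeltaW Ecov ω

/-- The vector stratified difference-in-means estimator `τ̂_R`. -/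
def hatTauVec {d : ℕ} (R1 R0 : Fin E.N → Fin d → ℝ) (ω : E.Omega) : Fin d → ℝ := fun j =>
  ∑ k, E.Pi k * (E.mean1 (fun i => R1 i j) k ω - E.mean0 (fun i => R0 i j) k ω)
/-- The vector estimand `τ_R`. -/
def tauVec {d : ℕ} (R1 R0 : Fin E.N → Fin d → ℝ) : Fin d → ℝ := fun j =>
  ∑ k, E.Pi k * (E.meanK (fun i => R1 i j) k - E.meanK (fun i => R0 i j) k)
/-- The covariance matrix `V_R` of `√n (τ̂_R - τ_R)`. -/
def VRmat {d : ℕ} (R1 R0 : Fin E.N → Fin d → ℝ) : Matrix (Fin d) (Fin d) ℝ :=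
  Matrix.of fun j j' =>
    ∑ k, (E.Pi k) ^ 2 / E.pik k *
      (E.covK (fun i => R1 i j) (fun i => R1 i j') k / E.e1 k +
        E.covK (fun i => R0 i j) (fun i => R0 i j') k / E.e0 k -
        E.fk k * E.covK (fun i => R1 i j - R0 i j) (fun i => R1 i j' - R0 i j') k)

/-- The attainable sampling vectors. -/
def validZ : Finset (Fin E.N → Bool) :=
  Finset.univ.filter fun z => ∀ k, ((E.stratum k).filter fun i => z i = true).card = E.nk k
/-- Stratified random sampling without replacement: the uniform distribution over attainable
sampling vectors. -/
def Psamp : Measure (Fin E.N → Bool) := unif E.validZ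
/-- `δ̂_W` as a function of the sampling vector alone. -/
def deltaWz {J : ℕ} (W : Fin E.N → Fin J → ℝ) (z : Fin E.N → Bool) : Fin J → ℝ := fun j =>
  ∑ k, E.Pi k *
    ((∑ i ∈ E.stratum k, (if z i then (1 : ℝ) else 0) * W i j) / (E.nk k : ℝ) -
      E.meanK (fun i => W i j) k)

/-- The attainable treatment-assignment vectors given the sampling vector `z`. -/
def validT (z : Fin E.N → Bool) : Finset (Fin E.N → Bool) :=
  Finset.univ.filter fun t =>
    (∀ k, ((E.stratum k).filter fun i => z i = true ∧ t i = true).card = E.nk1 k) ∧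
    (∀ i, t i = true → z i = true)
/-- Stratified randomization of the sampled units, conditionally on the sampling vector `z`. -/
def Pgiven (z : Fin E.N → Bool) : Measure E.Omega :=
  unif ((E.validT z).image fun t => (z, t))

/-- `M_S` as a function of the sampling vector alone. -/
def MSz {J : ℕ} (W : Fin E.N → Fin J → ℝ) (z : Fin E.N → Bool) : ℝ := E.MS W (z, z)
/-- The acceptable sampling vectors. -/
def acceptZ {J : ℕ} (W : Fin E.N → Fin J → ℝ) (aS : ℝ) : Finset (Fin E.N → Bool) :=
  E.validZ.filter fun z => E.MSz W z ≤ aS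
/-- The acceptable assignment vectors given a sampling vector `z`. -/
def acceptT {J : ℕ} (X : Fin E.N → Fin J → ℝ) (aT : ℝ) (z : Fin E.N → Bool) :
    Finset (Fin E.N → Bool) := (E.validT z).filter fun t => E.MT X (z, t) ≤ aT
/-- The set `M` of jointly acceptable pairs. -/
def acceptedPairs {J1 J2 : ℕ} (W : Fin E.N → Fin J1 → ℝ) (X : Fin E.N → Fin J2 → ℝ)
    (aS aT : ℝ) : Finset E.Omega :=
  E.valid.filter fun ω => E.MS W ω ≤ aS ∧ E.MT X ω ≤ aT
/-- The single-stage rejective design: uniform over jointly acceptable pairs. -/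
def singleStage {J1 J2 : ℕ} (W : Fin E.N → Fin J1 → ℝ) (X : Fin E.N → Fin J2 → ℝ)
    (aS aT : ℝ) : Measure E.Omega := unif (E.acceptedPairs W X aS aT)
/-- The two-stage rejective design: first a uniform acceptable sampling, then a uniform
acceptable assignment given the sampling. -/
def twoStage {J1 J2 : ℕ} (W : Fin E.N → Fin J1 → ℝ) (X : Fin E.N → Fin J2 → ℝ) (aS aT : ℝ) :
    Measure E.Omega :=
  ((E.acceptZ W aS).card : ℝ≥0∞)⁻¹ • ∑ z ∈ E.acceptZ W aS,
    (((E.acceptT X aT z).card : ℝ≥0∞)⁻¹ • ∑ t ∈ E.acceptT X aT z, Measure.dirac (z, t))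
/-- The conditional acceptance probability `P(M_T ≤ a_T ∣ Z = z)`. -/
def condAcceptProb {J : ℕ} (X : Fin E.N → Fin J → ℝ) (aT : ℝ) (z : Fin E.N → Bool) : ℝ :=
  ((E.acceptT X aT z).card : ℝ) / ((E.validT z).card : ℝ)

end SRSE



section Aux

open Finset

lemma integral_unif {α : Type*} [MeasurableSpace α] [MeasurableSingletonClass α] [Finite α]
    (s : Finset α) (f : α → ℝ) :
    ∫ x, f x ∂(unif s) = (s.card : ℝ)⁻¹ * ∑ a ∈ s, f a := by
  rw [unif, integral_smul_measure,
    integral_finset_sum_measure fun i _ => MeasureTheory.Integrable.of_finite]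
  simp only [integral_dirac]
  rcases eq_or_ne s.card 0 with h | h
  · simp [h, Finset.card_eq_zero.mp h]
  · rw [ENNReal.toReal_inv, smul_eq_mul]
    norm_num

lemma sum_pairs {ι : Type*} (S : Finset ι) (w a : ι → ℝ) :
    ∑ i ∈ S, ∑ j ∈ S, w i * w j * (a i - a j)^2
      = 2*((∑ i ∈ S, w i) * (∑ i ∈ S, w i * a i^2) - (∑ i ∈ S, w i * a i)^2) := by
  have h : ∀ i ∈ S, ∑ j ∈ S, w i * w j * (a i - a j)^2
      = (w i * a i^2) * (∑ j ∈ S, w j) - 2*((w i * a i) * (∑ j ∈ S, w j * a j))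
        + w i * (∑ j ∈ S, w j * a j^2) := by
    intro i _
    simp only [Finset.mul_sum, ← Finset.sum_sub_distrib, ← Finset.sum_add_distrib]
    exact Finset.sum_congr rfl fun j _ => by ring
  rw [Finset.sum_congr rfl h]
  simp only [Finset.sum_add_distrib, Finset.sum_sub_distrib, ← Finset.sum_mul, ← Finset.mul_sum]
  ring

lemma var_pairs {ι : Type*} (S : Finset ι) (w a : ι → ℝ) (M : ℝ)
    (hM : ∑ i ∈ S, w i = M) (h0 : M ≠ 0) :
    ∑ i ∈ S, w i * (a i - (∑ j ∈ S, w j * a j)/M)^2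
      = (∑ i ∈ S, ∑ j ∈ S, w i * w j * (a i - a j)^2) / (2*M) := by
  have h : ∀ i ∈ S, w i * (a i - (∑ j ∈ S, w j * a j)/M)^2
      = w i * a i^2 - (2*(∑ j ∈ S, w j * a j)/M)*(w i*a i)
        + ((∑ j ∈ S, w j * a j)/M)^2 * w i := fun i _ => by ring
  rw [Finset.sum_congr rfl h]
  simp only [Finset.sum_add_distrib, Finset.sum_sub_distrib, ← Finset.mul_sum]
  rw [sum_pairs, hM]
  field_simp
  ring

variable {E : SRSE}

lemma mem_stratum {k : Fin E.K} {i : Fin E.N} : i ∈ E.stratum k ↔ E.st i = k := by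
  simp [SRSE.stratum]

lemma st_swap {u v : Fin E.N} (h : E.st u = E.st v) (x : Fin E.N) :
    E.st (Equiv.swap u v x) = E.st x := by
  rcases eq_or_ne x u with rfl | hu
  · rw [Equiv.swap_apply_left]; exact h.symm
  rcases eq_or_ne x v with rfl | hv
  · rw [Equiv.swap_apply_right]; exact h
  · rw [Equiv.swap_apply_of_ne_of_ne hu hv]

lemma filter_card_perm (σ : Equiv.Perm (Fin E.N)) (hσ : ∀ x, E.st (σ x) = E.st x)
    (k : Fin E.K) (p : Fin E.N → Prop) [DecidablePred p] :
    ((E.stratum k).filter fun i => p (σ i)).card = ((E.stratum k).filter p).card := by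
  apply Finset.card_nbij' (i := fun i => σ i) (j := fun j => σ.symm j)
  · intro x hx
    rw [Finset.mem_coe, Finset.mem_filter] at hx ⊢
    exact ⟨mem_stratum.mpr (by rw [hσ]; exact mem_stratum.mp hx.1), hx.2⟩
  · intro y hy
    rw [Finset.mem_coe, Finset.mem_filter] at hy ⊢
    constructor
    · apply mem_stratum.mpr
      have h2 := hσ (σ.symm y)
      rw [Equiv.apply_symm_apply] at h2
      rw [← h2]; exact mem_stratum.mp hy.1
    · show p (σ (σ.symm y)); rw [Equiv.apply_symm_apply]; exact hy.2
  · intro x _; exact Equiv.symm_apply_apply σ x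
  · intro y _; exact Equiv.apply_symm_apply σ y

lemma mem_valid_perm (σ : Equiv.Perm (Fin E.N)) (hσ : ∀ x, E.st (σ x) = E.st x)
    {ω : E.Omega} (hω : ω ∈ E.valid) : (ω.1 ∘ σ, ω.2 ∘ σ) ∈ E.valid := by
  simp only [SRSE.valid, Finset.mem_filter, Finset.mem_univ, true_and] at hω ⊢
  obtain ⟨h1, h2, h3⟩ := hω
  refine ⟨fun k => ?_, fun k => ?_, fun i hi => h3 _ hi⟩
  · exact (filter_card_perm σ hσ k (fun j => ω.1 j = true)).trans (h1 k)
  · exact (filter_card_perm σ hσ k (fun j => ω.1 j = true ∧ ω.2 j = true)).trans (h2 k)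

lemma sum_valid_perm (σ : Equiv.Perm (Fin E.N)) (hσ : ∀ x, E.st (σ x) = E.st x)
    (g : E.Omega → ℝ) :
    ∑ ω ∈ E.valid, g (ω.1 ∘ σ, ω.2 ∘ σ) = ∑ ω ∈ E.valid, g ω := by
  have hσ' : ∀ x, E.st (σ.symm x) = E.st x := by
    intro x
    have h2 := hσ (σ.symm x)
    rw [Equiv.apply_symm_apply] at h2
    exact h2.symm
  refine Finset.sum_equiv
    (⟨fun ω => (ω.1 ∘ σ, ω.2 ∘ σ), fun ω => (ω.1 ∘ σ.symm, ω.2 ∘ σ.symm), ?_, ?_⟩ :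
      E.Omega ≃ E.Omega) ?_ ?_
  · intro ω
    refine Prod.ext (funext fun x => ?_) (funext fun x => ?_) <;>
      simp [Function.comp, Equiv.symm_apply_apply]
  · intro ω
    refine Prod.ext (funext fun x => ?_) (funext fun x => ?_) <;>
      simp [Function.comp, Equiv.apply_symm_apply]
  · intro ω
    simp only [Equiv.coe_fn_mk]
    constructor
    · intro h; exact mem_valid_perm σ hσ h
    · intro h
      have h2 := mem_valid_perm σ.symm hσ' h
      have h3 : (((ω.1 ∘ σ) ∘ σ.symm, (ω.2 ∘ σ) ∘ σ.symm) : E.Omega) = ω :=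
        Prod.ext (funext fun x => by simp) (funext fun x => by simp)
      rwa [h3] at h2
  · intro ω _; rfl

/-- The indicator weight of selection pattern `Q`. -/
def Wq (Q : Bool → Bool → Bool) (ω : E.Omega) (i : Fin E.N) : ℝ :=
  if Q (ω.1 i) (ω.2 i) then 1 else 0

lemma Wq_sq (Q : Bool → Bool → Bool) (ω : E.Omega) (i : Fin E.N) :
    Wq Q ω i * Wq Q ω i = Wq Q ω i := by
  unfold Wq; split_ifs <;> norm_num

lemma pairweight_const (Q : Bool → Bool → Bool) (k : Fin E.K) {i j i' j' : Fin E.N}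
    (hi : i ∈ E.stratum k) (hj : j ∈ E.stratum k) (hi' : i' ∈ E.stratum k)
    (hj' : j' ∈ E.stratum k) (hij : i ≠ j) (hij' : i' ≠ j') :
    ∑ ω ∈ E.valid, Wq Q ω i * Wq Q ω j = ∑ ω ∈ E.valid, Wq Q ω i' * Wq Q ω j' := by
  set σ1 := Equiv.swap i' i with hσ1
  have hst_ii' : E.st i' = E.st i := by
    rw [mem_stratum.mp hi', mem_stratum.mp hi]
  have hst_j'' : E.st (σ1 j') = E.st j := by
    rw [st_swap hst_ii' j', mem_stratum.mp hj', mem_stratum.mp hj]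
  set σ : Equiv.Perm (Fin E.N) := σ1.trans (Equiv.swap (σ1 j') j) with hσdef
  have hσ : ∀ x, E.st (σ x) = E.st x := by
    intro x
    show E.st (Equiv.swap (σ1 j') j (σ1 x)) = E.st x
    rw [st_swap hst_j'', st_swap hst_ii']
  have hne1 : i ≠ σ1 j' := by
    intro h
    have h2 : σ1 (σ1 j') = σ1 i := by rw [h]
    rw [Equiv.swap_apply_self, Equiv.swap_apply_right] at h2
    exact hij' h2.symm
  have hσi : σ i' = i := by
    show Equiv.swap (σ1 j') j (σ1 i') = i
    rw [show σ1 i' = i from Equiv.swap_apply_left i' i,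
      Equiv.swap_apply_of_ne_of_ne hne1 hij]
  have hσj : σ j' = j := by
    show Equiv.swap (σ1 j') j (σ1 j') = j
    exact Equiv.swap_apply_left _ _
  calc ∑ ω ∈ E.valid, Wq Q ω i * Wq Q ω j
      = ∑ ω ∈ E.valid,
          Wq Q (ω.1 ∘ σ, ω.2 ∘ σ) i' * Wq Q (ω.1 ∘ σ, ω.2 ∘ σ) j' := by
        refine Finset.sum_congr rfl fun ω _ => ?_
        simp only [Wq, Function.comp, hσi, hσj]
    _ = ∑ ω ∈ E.valid, Wq Q ω i' * Wq Q ω j' :=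
        sum_valid_perm σ hσ (fun ω => Wq Q ω i' * Wq Q ω j')

lemma Wq_sum (Q : Bool → Bool → Bool) (k : Fin E.K) (m : ℕ)
    (hcount : ∀ ω ∈ E.valid,
      (((E.stratum k).filter fun i => Q (ω.1 i) (ω.2 i) = true)).card = m)
    {ω : E.Omega} (hω : ω ∈ E.valid) :
    ∑ i ∈ E.stratum k, Wq Q ω i = (m : ℝ) := by
  unfold Wq
  rw [Finset.sum_boole]
  exact_mod_cast hcount ω hω

lemma expect_scov (hVne : E.valid.Nonempty) (k : Fin E.K) (Q : Bool → Bool → Bool)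
    (m : ℕ) (hm : 2 ≤ m) (hNk : 2 ≤ E.Nk k)
    (hcount : ∀ ω ∈ E.valid,
      (((E.stratum k).filter fun i => Q (ω.1 i) (ω.2 i) = true)).card = m)
    (a : Fin E.N → ℝ) :
    ∫ ω, (∑ i ∈ E.stratum k,
        Wq Q ω i * (a i - (∑ j ∈ E.stratum k, Wq Q ω j * a j) / (m : ℝ))^2) / ((m : ℝ) - 1)
      ∂E.P = E.covK a a k := by
  have hm0 : (m : ℝ) ≠ 0 := by positivity
  have hm1 : (m : ℝ) - 1 ≠ 0 := by
    have : (2 : ℝ) ≤ (m : ℝ) := by exact_mod_cast hm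
    linarith
  have hNkR : (2 : ℝ) ≤ (E.Nk k : ℝ) := by exact_mod_cast hNk
  have hNk0 : (E.Nk k : ℝ) ≠ 0 := by linarith
  have hNk1 : (E.Nk k : ℝ) - 1 ≠ 0 := by linarith
  obtain ⟨i₀, hi₀, j₀, hj₀, hne₀⟩ := Finset.one_lt_card.mp (by rw [show (E.stratum k).card = E.Nk k from rfl]; omega)
  set S := E.stratum k with hS
  set c₀ := ∑ ω ∈ E.valid, Wq Q ω i₀ * Wq Q ω j₀ with hc₀
  set V := (E.valid.card : ℝ) with hV
  have hV0 : V ≠ 0 := by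
    have := Finset.card_pos.mpr hVne
    positivity
  set Qd := ∑ i ∈ S, ∑ j ∈ S, (a i - a j)^2 with hQd
  have hpt : ∀ ω ∈ E.valid,
      (∑ i ∈ S, Wq Q ω i * (a i - (∑ j ∈ S, Wq Q ω j * a j) / (m : ℝ))^2) / ((m : ℝ) - 1)
        = (∑ i ∈ S, ∑ j ∈ S, Wq Q ω i * Wq Q ω j * (a i - a j)^2)
            / (2*(m:ℝ)*((m:ℝ)-1)) := by
    intro ω hω
    rw [var_pairs S (Wq Q ω) a (m : ℝ) (Wq_sum Q k m hcount hω) hm0, div_div, mul_assoc]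
  have hconst : ∀ i ∈ S, ∀ j ∈ S, i ≠ j →
      ∑ ω ∈ E.valid, Wq Q ω i * Wq Q ω j = c₀ :=
    fun i hi j hj hij => pairweight_const Q k hi hj hi₀ hj₀ hij hne₀
  have hcomm3 : ∀ F : E.Omega → Fin E.N → Fin E.N → ℝ,
      ∑ ω ∈ E.valid, ∑ i ∈ S, ∑ j ∈ S, F ω i j
        = ∑ i ∈ S, ∑ j ∈ S, ∑ ω ∈ E.valid, F ω i j := by
    intro F
    rw [Finset.sum_comm]
    exact Finset.sum_congr rfl fun i _ => Finset.sum_comm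
  have hswap : ∑ ω ∈ E.valid, ∑ i ∈ S, ∑ j ∈ S, Wq Q ω i * Wq Q ω j * (a i - a j)^2
      = ∑ i ∈ S, ∑ j ∈ S, (∑ ω ∈ E.valid, Wq Q ω i * Wq Q ω j) * (a i - a j)^2 := by
    rw [hcomm3]
    refine Finset.sum_congr rfl fun i _ => Finset.sum_congr rfl fun j _ => ?_
    rw [Finset.sum_mul]
  have hdouble : ∑ i ∈ S, ∑ j ∈ S, (∑ ω ∈ E.valid, Wq Q ω i * Wq Q ω j) * (a i - a j)^2
      = c₀ * Qd := by
    rw [hQd, Finset.mul_sum]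
    refine Finset.sum_congr rfl fun i hi => ?_
    rw [Finset.mul_sum]
    refine Finset.sum_congr rfl fun j hj => ?_
    rcases eq_or_ne i j with rfl | hij
    · simp
    · rw [hconst i hi j hj hij]
  -- counting identity
  have hcnt : (E.Nk k : ℝ) * ((E.Nk k : ℝ) - 1) * c₀ = V * ((m:ℝ) * ((m:ℝ) - 1)) := by
    have htot : ∑ ω ∈ E.valid, ∑ i ∈ S, ∑ j ∈ S, Wq Q ω i * Wq Q ω j = V * (m:ℝ)^2 := by
      have h1 : ∀ ω ∈ E.valid, ∑ i ∈ S, ∑ j ∈ S, Wq Q ω i * Wq Q ω j = (m:ℝ)^2 := by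
        intro ω hω
        rw [← Finset.sum_mul_sum, Wq_sum Q k m hcount hω]
        ring
      rw [Finset.sum_congr rfl h1, Finset.sum_const, nsmul_eq_mul, hV]
    have hdiag : ∑ i ∈ S, ∑ ω ∈ E.valid, Wq Q ω i * Wq Q ω i = V * (m:ℝ) := by
      rw [Finset.sum_comm]
      have h1 : ∀ ω ∈ E.valid, ∑ i ∈ S, Wq Q ω i * Wq Q ω i = (m:ℝ) := by
        intro ω hω
        rw [Finset.sum_congr rfl fun i _ => Wq_sq Q ω i]
        exact Wq_sum Q k m hcount hω
      rw [Finset.sum_congr rfl h1, Finset.sum_const, nsmul_eq_mul, hV]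
    have hsplit : ∑ i ∈ S, ∑ j ∈ S, ∑ ω ∈ E.valid, Wq Q ω i * Wq Q ω j
        = V * (m:ℝ) + (E.Nk k : ℝ) * (((E.Nk k : ℝ) - 1) * c₀) := by
      have h2 : ∀ i ∈ S, ∑ j ∈ S, ∑ ω ∈ E.valid, Wq Q ω i * Wq Q ω j
          = (∑ ω ∈ E.valid, Wq Q ω i * Wq Q ω i) + ((E.Nk k : ℝ) - 1) * c₀ := by
        intro i hi
        rw [← Finset.add_sum_erase _ _ hi]
        congr 1
        have h3 : ∀ j ∈ S.erase i, ∑ ω ∈ E.valid, Wq Q ω i * Wq Q ω j = c₀ := by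
          intro j hj
          exact hconst i hi j (Finset.mem_of_mem_erase hj)
            (Ne.symm (Finset.ne_of_mem_erase hj))
        rw [Finset.sum_congr rfl h3, Finset.sum_const, nsmul_eq_mul,
          Finset.card_erase_of_mem hi,
          show ((S.card - 1 : ℕ) : ℝ) = (E.Nk k : ℝ) - 1 by
            rw [show S.card = E.Nk k from rfl,
              Nat.cast_sub (by omega : 1 ≤ E.Nk k), Nat.cast_one]]
      rw [Finset.sum_congr rfl h2, Finset.sum_add_distrib, hdiag, Finset.sum_const,
        nsmul_eq_mul]
      rw [show S.card = E.Nk k from rfl]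
    have heq : V * (m:ℝ)^2 = V * (m:ℝ) + (E.Nk k : ℝ) * (((E.Nk k : ℝ) - 1) * c₀) := by
      rw [← htot, hcomm3, hsplit]
    linear_combination -heq
  have hcov : E.covK a a k = Qd / (2 * (E.Nk k : ℝ) * ((E.Nk k : ℝ) - 1)) := by
    unfold SRSE.covK SRSE.meanK
    have h1 : ∀ i ∈ S, (a i - (∑ x ∈ E.stratum k, a x) / (E.Nk k : ℝ))
        * (a i - (∑ x ∈ E.stratum k, a x) / (E.Nk k : ℝ))
        = (1:ℝ) * (a i - (∑ j ∈ S, (1:ℝ) * a j) / ((E.Nk k : ℕ) : ℝ))^2 := by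
      intro i _
      rw [← hS]
      simp only [one_mul]
      ring
    rw [Finset.sum_congr rfl h1,
      var_pairs S (fun _ => (1:ℝ)) a ((E.Nk k : ℕ) : ℝ)
        (by rw [Finset.sum_const, nsmul_eq_mul, mul_one]; simp [hS, SRSE.Nk]) hNk0]
    have h2 : ∑ i ∈ S, ∑ j ∈ S, (1:ℝ) * 1 * (a i - a j)^2 = Qd := by
      rw [hQd]
      exact Finset.sum_congr rfl fun i _ => Finset.sum_congr rfl fun j _ => by ring
    rw [h2, div_div]
  -- assemble
  rw [show E.P = unif E.valid from rfl, integral_unif, Finset.sum_congr rfl hpt,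
    ← Finset.sum_div, hswap, hdouble, hcov]
  field_simp
  linear_combination Qd * hcnt

lemma integral_sCov1 (hVne : E.valid.Nonempty) (k : Fin E.K) (hm : 2 ≤ E.nk1 k)
    (hNk : 2 ≤ E.Nk k) (a : Fin E.N → ℝ) :
    ∫ ω, E.sCov1 a a k ω ∂E.P = E.covK a a k := by
  have hcount : ∀ ω ∈ E.valid,
      (((E.stratum k).filter fun i => (ω.1 i && ω.2 i) = true)).card = E.nk1 k := by
    intro ω hω
    simp only [SRSE.valid, Finset.mem_filter, Finset.mem_univ, true_and] at hω
    simp only [Bool.and_eq_true]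
    exact hω.2.1 k
  have hfun : (fun ω => E.sCov1 a a k ω) = fun ω =>
      (∑ i ∈ E.stratum k, Wq (fun b1 b2 => b1 && b2) ω i *
        (a i - (∑ j ∈ E.stratum k, Wq (fun b1 b2 => b1 && b2) ω j * a j)
          / ((E.nk1 k : ℕ) : ℝ))^2) / (((E.nk1 k : ℕ) : ℝ) - 1) := by
    funext ω
    have hzt : ∀ x, E.Z ω x * E.T ω x = Wq (fun b1 b2 => b1 && b2) ω x := by
      intro x; unfold SRSE.Z SRSE.T Wq
      cases h1 : ω.1 x <;> cases h2 : ω.2 x <;> simp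
    unfold SRSE.sCov1 SRSE.mean1
    congr 1
    refine Finset.sum_congr rfl fun i _ => ?_
    have hmean : (∑ j ∈ E.stratum k, E.Z ω j * E.T ω j * a j)
        = ∑ j ∈ E.stratum k, Wq (fun b1 b2 => b1 && b2) ω j * a j :=
      Finset.sum_congr rfl fun j _ => by rw [hzt]
    rw [hmean, hzt]
    ring
  rw [hfun]
  exact expect_scov hVne k _ (E.nk1 k) hm hNk hcount a

lemma integral_sCov0 (hVne : E.valid.Nonempty) (k : Fin E.K) (hm : 2 ≤ E.nk0 k)
    (hNk : 2 ≤ E.Nk k) (a : Fin E.N → ℝ) :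
    ∫ ω, E.sCov0 a a k ω ∂E.P = E.covK a a k := by
  have hcount : ∀ ω ∈ E.valid,
      (((E.stratum k).filter fun i => (ω.1 i && !ω.2 i) = true)).card = E.nk0 k := by
    intro ω hω
    simp only [SRSE.valid, Finset.mem_filter, Finset.mem_univ, true_and] at hω
    obtain ⟨h1, h2, _⟩ := hω
    have hdiff : ((E.stratum k).filter fun i => (ω.1 i && !ω.2 i) = true)
        = ((E.stratum k).filter fun i => ω.1 i = true)
          \ ((E.stratum k).filter fun i => ω.1 i = true ∧ ω.2 i = true) := by
      ext x
      simp only [Finset.mem_filter, Finset.mem_sdiff, Bool.and_eq_true,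
        Bool.not_eq_true']
      constructor
      · rintro ⟨hx, hx1, hx2⟩
        exact ⟨⟨hx, hx1⟩, fun h => by simp [hx2] at h⟩
      · rintro ⟨⟨hx, hx1⟩, hx2⟩
        refine ⟨hx, hx1, ?_⟩
        cases h : ω.2 x
        · rfl
        · exact absurd ⟨hx, hx1, h⟩ hx2
    have hsubf : ((E.stratum k).filter fun i => ω.1 i = true ∧ ω.2 i = true)
        ⊆ ((E.stratum k).filter fun i => ω.1 i = true) := by
      intro x hx
      rw [Finset.mem_filter] at hx ⊢
      exact ⟨hx.1, hx.2.1⟩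
    rw [hdiff, Finset.card_sdiff_of_subset hsubf, h1 k, h2 k]
    rfl
  have hfun : (fun ω => E.sCov0 a a k ω) = fun ω =>
      (∑ i ∈ E.stratum k, Wq (fun b1 b2 => b1 && !b2) ω i *
        (a i - (∑ j ∈ E.stratum k, Wq (fun b1 b2 => b1 && !b2) ω j * a j)
          / ((E.nk0 k : ℕ) : ℝ))^2) / (((E.nk0 k : ℕ) : ℝ) - 1) := by
    funext ω
    have hzt : ∀ x, E.Z ω x * (1 - E.T ω x) = Wq (fun b1 b2 => b1 && !b2) ω x := by
      intro x; unfold SRSE.Z SRSE.T Wq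
      cases h1 : ω.1 x <;> cases h2 : ω.2 x <;> simp
    unfold SRSE.sCov0 SRSE.mean0
    congr 1
    refine Finset.sum_congr rfl fun i _ => ?_
    have hmean : (∑ j ∈ E.stratum k, E.Z ω j * (1 - E.T ω j) * a j)
        = ∑ j ∈ E.stratum k, Wq (fun b1 b2 => b1 && !b2) ω j * a j :=
      Finset.sum_congr rfl fun j _ => by rw [hzt]
    rw [hmean, hzt]
    ring
  rw [hfun]
  exact expect_scov hVne k _ (E.nk0 k) hm hNk hcount a

lemma valid_nonempty (hsub : ∀ k, E.nk k ≤ E.Nk k) (hsub1 : ∀ k, E.nk1 k ≤ E.nk k) :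
    E.valid.Nonempty := by
  have hA : ∀ k : Fin E.K, ∃ A : Finset (Fin E.N), A ⊆ E.stratum k ∧ A.card = E.nk k :=
    fun k => Finset.exists_subset_card_eq (hsub k)
  choose A hAsub hAcard using hA
  have hB : ∀ k, ∃ B : Finset (Fin E.N), B ⊆ A k ∧ B.card = E.nk1 k :=
    fun k => Finset.exists_subset_card_eq (by rw [hAcard]; exact hsub1 k)
  choose B hBsub hBcard using hB
  refine ⟨(fun i => decide (i ∈ A (E.st i)), fun i => decide (i ∈ B (E.st i))), ?_⟩
  simp only [SRSE.valid, Finset.mem_filter, Finset.mem_univ, true_and]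
  refine ⟨fun k => ?_, fun k => ?_, fun i hi => ?_⟩
  · have h : (E.stratum k).filter (fun i => decide (i ∈ A (E.st i)) = true) = A k := by
      ext x
      simp only [Finset.mem_filter, decide_eq_true_eq]
      constructor
      · rintro ⟨hx, hmem⟩; rwa [mem_stratum.mp hx] at hmem
      · intro hx
        have hxs := hAsub k hx
        exact ⟨hxs, by rwa [mem_stratum.mp hxs]⟩
    rw [h, hAcard]
  · have h : (E.stratum k).filter
        (fun i => decide (i ∈ A (E.st i)) = true ∧ decide (i ∈ B (E.st i)) = true) = B k := by
      ext x
      simp only [Finset.mem_filter, decide_eq_true_eq]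
      constructor
      · rintro ⟨hx, _, hmemB⟩; rwa [mem_stratum.mp hx] at hmemB
      · intro hx
        have hxa := hBsub k hx
        have hxs := hAsub k hxa
        have hst : E.st x = k := mem_stratum.mp hxs
        exact ⟨hxs, by rw [hst]; exact hxa, by rw [hst]; exact hx⟩
    rw [h, hBcard]
  · simp only [decide_eq_true_eq] at hi ⊢
    exact hBsub _ hi

end Aux

/-- under the stratified randomized survey experiment the within-stratum
arm-specific sample variances are unbiased for the stratum population variances, and the
variance estimator `V̂_ττ` is conservative in expectation:
`E[V̂_ττ] - V_ττ = f ∑ₖ Π_[k] S²_[k]τ ≥ 0`, with equality iff `S²_[k]τ = 0` for all `k`. -/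
theorem statement10 (E : SurveyExperiments.SRSE) (Y1 Y0 : Fin E.N → ℝ)
    (hlo : ∀ k, 2 ≤ E.nk1 k) (hhi : ∀ k, E.nk1 k + 2 ≤ E.nk k)
    (hsub : ∀ k, E.nk k ≤ E.Nk k) :
    (∀ k, ∫ ω, E.sCov1 Y1 Y1 k ω ∂E.P = E.covK Y1 Y1 k) ∧
    (∀ k, ∫ ω, E.sCov0 Y0 Y0 k ω ∂E.P = E.covK Y0 Y0 k) ∧
    ((∫ ω, E.hatVtt Y1 Y0 ω ∂E.P) - E.Vtt Y1 Y0
        = E.f * ∑ k, E.Pi k * E.covK (fun i => Y1 i - Y0 i) (fun i => Y1 i - Y0 i) k) ∧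
    (0 ≤ (∫ ω, E.hatVtt Y1 Y0 ω ∂E.P) - E.Vtt Y1 Y0) ∧
    ((∫ ω, E.hatVtt Y1 Y0 ω ∂E.P) = E.Vtt Y1 Y0 ↔
      ∀ k, E.covK (fun i => Y1 i - Y0 i) (fun i => Y1 i - Y0 i) k = 0) := by
  classical
  have hsub1 : ∀ k, E.nk1 k ≤ E.nk k := fun k => by have := hhi k; omega
  have hVne : E.valid.Nonempty := valid_nonempty hsub hsub1
  have hNk2 : ∀ k, 2 ≤ E.Nk k := fun k => by
    have := hhi k; have := hlo k; have := hsub k; omega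
  have hm0 : ∀ k, 2 ≤ E.nk0 k := fun k => by
    have := hhi k
    show 2 ≤ E.nk k - E.nk1 k
    omega
  have h1 : ∀ k, ∫ ω, E.sCov1 Y1 Y1 k ω ∂E.P = E.covK Y1 Y1 k :=
    fun k => integral_sCov1 hVne k (hlo k) (hNk2 k) Y1
  have h0 : ∀ k, ∫ ω, E.sCov0 Y0 Y0 k ω ∂E.P = E.covK Y0 Y0 k :=
    fun k => integral_sCov0 hVne k (hm0 k) (hNk2 k) Y0
  -- numeric positivity facts per stratum
  have hNkN : ∀ k, E.Nk k ≤ E.N := fun k => by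
    have := Finset.card_le_univ (E.stratum k)
    simpa [SRSE.Nk] using this
  have hnkn : ∀ k, E.nk k ≤ E.n := fun k =>
    Finset.single_le_sum (fun k _ => Nat.zero_le _) (Finset.mem_univ k)
  -- part 3
  have h3 : (∫ ω, E.hatVtt Y1 Y0 ω ∂E.P) - E.Vtt Y1 Y0
      = E.f * ∑ k, E.Pi k * E.covK (fun i => Y1 i - Y0 i) (fun i => Y1 i - Y0 i) k := by
    have h1' : ∀ k, (E.valid.card : ℝ)⁻¹ * ∑ ω ∈ E.valid, E.sCov1 Y1 Y1 k ω
        = E.covK Y1 Y1 k := fun k => by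
      rw [← integral_unif]; exact h1 k
    have h0' : ∀ k, (E.valid.card : ℝ)⁻¹ * ∑ ω ∈ E.valid, E.sCov0 Y0 Y0 k ω
        = E.covK Y0 Y0 k := fun k => by
      rw [← integral_unif]; exact h0 k
    have hint : ∫ ω, E.hatVtt Y1 Y0 ω ∂E.P
        = ∑ k, (E.Pi k)^2 / E.pik k *
            (E.covK Y1 Y1 k / E.e1 k + E.covK Y0 Y0 k / E.e0 k) := by
      rw [show E.P = unif E.valid from rfl, integral_unif]
      unfold SRSE.hatVtt
      rw [Finset.sum_comm, Finset.mul_sum]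
      refine Finset.sum_congr rfl fun k _ => ?_
      rw [← h1' k, ← h0' k, ← Finset.mul_sum, Finset.sum_add_distrib,
        ← Finset.sum_div, ← Finset.sum_div]
      ring
    rw [hint]
    unfold SRSE.Vtt
    rw [← Finset.sum_sub_distrib, Finset.mul_sum]
    refine Finset.sum_congr rfl fun k _ => ?_
    have hid : (E.Pi k)^2 / E.pik k * E.fk k = E.f * E.Pi k := by
      have hNk' : (0:ℝ) < (E.Nk k : ℝ) := by
        have := hNk2 k
        exact_mod_cast (by omega : 0 < E.Nk k)
      have hN' : (0:ℝ) < (E.N : ℝ) := by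
        have h := hNkN k; have := hNk2 k
        have : 0 < E.N := by omega
        exact_mod_cast this
      have hnk' : (0:ℝ) < (E.nk k : ℝ) := by
        have := hlo k; have := hhi k
        have : 0 < E.nk k := by omega
        exact_mod_cast this
      have hn' : (0:ℝ) < (E.n : ℝ) := by
        have h := hnkn k; have := hlo k; have := hhi k
        have : 0 < E.n := by omega
        exact_mod_cast this
      unfold SRSE.Pi SRSE.pik SRSE.fk SRSE.f
      field_simp
    linear_combination (E.covK (fun i => Y1 i - Y0 i) (fun i => Y1 i - Y0 i) k) * hid
  -- part 4
  have hcovnn : ∀ k, 0 ≤ E.covK (fun i => Y1 i - Y0 i) (fun i => Y1 i - Y0 i) k := by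
    intro k
    apply div_nonneg (Finset.sum_nonneg fun i _ => mul_self_nonneg _)
    have : (2:ℝ) ≤ (E.Nk k : ℝ) := by exact_mod_cast hNk2 k
    linarith
  have hfnn : 0 ≤ E.f := by
    unfold SRSE.f
    positivity
  have hPinn : ∀ k, 0 ≤ E.Pi k := fun k => by
    unfold SRSE.Pi
    positivity
  have h4 : 0 ≤ (∫ ω, E.hatVtt Y1 Y0 ω ∂E.P) - E.Vtt Y1 Y0 := by
    rw [h3]
    exact mul_nonneg hfnn (Finset.sum_nonneg fun k _ => mul_nonneg (hPinn k) (hcovnn k))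
  refine ⟨h1, h0, h3, h4, ?_⟩
  constructor
  · intro heq k
    have hzero : E.f * ∑ k, E.Pi k *
        E.covK (fun i => Y1 i - Y0 i) (fun i => Y1 i - Y0 i) k = 0 := by
      rw [← h3, heq]; ring
    have hfpos : 0 < E.f := by
      have hN : 0 < E.N := by have := hNkN k; have := hNk2 k; omega
      have hn : 0 < E.n := by have := hnkn k; have := hlo k; have := hhi k; omega
      unfold SRSE.f
      have hN' : (0:ℝ) < (E.N : ℝ) := by exact_mod_cast hN
      have hn' : (0:ℝ) < (E.n : ℝ) := by exact_mod_cast hn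
      positivity
    have hsum0 : ∑ k, E.Pi k *
        E.covK (fun i => Y1 i - Y0 i) (fun i => Y1 i - Y0 i) k = 0 := by
      rcases mul_eq_zero.mp hzero with h | h
      · exact absurd h (ne_of_gt hfpos)
      · exact h
    have hall := (Finset.sum_eq_zero_iff_of_nonneg
      (fun j _ => mul_nonneg (hPinn j) (hcovnn j))).mp hsum0 k (Finset.mem_univ k)
    have hPipos : 0 < E.Pi k := by
      have hN : 0 < E.N := by have := hNkN k; have := hNk2 k; omega
      have hNk : 0 < E.Nk k := by have := hNk2 k; omega
      unfold SRSE.Pi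
      have hN' : (0:ℝ) < (E.N : ℝ) := by exact_mod_cast hN
      have hNk' : (0:ℝ) < (E.Nk k : ℝ) := by exact_mod_cast hNk
      positivity
    rcases mul_eq_zero.mp hall with h | h
    · exact absurd h (ne_of_gt hPipos)
    · exact h
  · intro hz
    have : ∑ k, E.Pi k * E.covK (fun i => Y1 i - Y0 i) (fun i => Y1 i - Y0 i) k = 0 :=
      Finset.sum_eq_zero fun k _ => by rw [hz k, mul_zero]
    have h5 := h3
    rw [this, mul_zero, sub_eq_zero] at h5
    exact h5
end SurveyExperiments
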